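/- In the setting of the previous abstract penalty problem (a coercive with coercivity constant α, s positive semidefinite with kernel W), the penalized solutions satisfy the quantitative bounds: s(u_σ, u_σ) ≤ C/σ and ‖u_σ - u_∞‖ ≤ C'/σ for constants C, C' independent of σ, where u_∞ ∈ W is the constrained solution. -/

import Mathlib

section aux
variable {V : Type*} [NormedAddCommGroup V] [InnerProductSpace ℝ V] [FiniteDimensional ℝ V]

noncomputable def bilinCLM (b : V →ₗ[ℝ] V →ₗ[ℝ] ℝ) : V →L[ℝ] V →L[ℝ] ℝ :=
  LinearMap.toContinuousLinearMap
    { toFun := fun x => LinearMap.toContinuousLinearMap (b x)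
      map_add' := by intro x y; ext v; simp
      map_smul' := by intro c x; ext v; simp }

lemma bilinCLM_apply (b : V →ₗ[ℝ] V →ₗ[ℝ] ℝ) (x y : V) : bilinCLM b x y = b x y := by
  simp [bilinCLM]

lemma bilin_bound (b : V →ₗ[ℝ] V →ₗ[ℝ] ℝ) (x y : V) :
    |b x y| ≤ ‖bilinCLM b‖ * ‖x‖ * ‖y‖ := by
  have h1 : ‖bilinCLM b x y‖ ≤ ‖bilinCLM b x‖ * ‖y‖ := (bilinCLM b x).le_opNorm y
  have h2 : ‖bilinCLM b x‖ ≤ ‖bilinCLM b‖ * ‖x‖ := (bilinCLM b).le_opNorm x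
  have : |b x y| = ‖bilinCLM b x y‖ := by rw [bilinCLM_apply]; rfl
  rw [this]
  calc ‖bilinCLM b x y‖ ≤ ‖bilinCLM b x‖ * ‖y‖ := h1
    _ ≤ ‖bilinCLM b‖ * ‖x‖ * ‖y‖ := by
        have := norm_nonneg y
        nlinarith [norm_nonneg (bilinCLM b x)]

lemma bilin_cont (b : V →ₗ[ℝ] V →ₗ[ℝ] ℝ) : Continuous fun v => b v v := by
  have : (fun v => b v v) = fun v => bilinCLM b v v := by
    funext v; rw [bilinCLM_apply]
  rw [this]
  exact (bilinCLM b).continuous.clm_apply continuous_id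

end aux

section aux2
variable {V : Type*} [NormedAddCommGroup V] [InnerProductSpace ℝ V] [FiniteDimensional ℝ V]

lemma psd_zero (s : V →ₗ[ℝ] V →ₗ[ℝ] ℝ) (hsymm : ∀ x y : V, s x y = s y x)
    (hpos : ∀ v : V, 0 ≤ s v v) {w : V} (hw : s w w = 0) (y : V) : s w y = 0 := by
  have h : ∀ t : ℝ, 0 ≤ (s y y) * (t * t) + (2 * s w y) * t + 0 := by
    intro t
    have h0 := hpos (w + t • y)
    have hexp : s (w + t • y) (w + t • y)
        = s w w + t * s w y + t * s y w + t * t * s y y := by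
      simp [map_add, map_smul, LinearMap.add_apply, LinearMap.smul_apply, smul_eq_mul]
      ring
    rw [hexp, hw, hsymm y w] at h0
    nlinarith [h0]
  have hd := discrim_le_zero h
  rw [discrim] at hd
  nlinarith [hd]

lemma psd_coercive (s : V →ₗ[ℝ] V →ₗ[ℝ] ℝ)
    (hpos : ∀ v : V, 0 ≤ s v v)
    (W : Submodule ℝ V) (hW : ∀ v : V, v ∈ W ↔ s v v = 0) :
    ∃ β : ℝ, 0 < β ∧ ∀ u : V, u ∈ Wᗮ → β * ‖u‖ ^ 2 ≤ s u u := by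
  by_cases hK : Wᗮ = ⊥
  · refine ⟨1, one_pos, fun u hu => ?_⟩
    rw [hK, Submodule.mem_bot] at hu
    simp [hu]
  · -- sphere in ↥Wᗮ nonempty
    obtain ⟨x, hxmem, hxne⟩ := Submodule.exists_mem_ne_zero_of_ne_bot hK
    have hxn : (0:ℝ) < ‖x‖ := norm_pos_iff.mpr hxne
    set y : ↥Wᗮ := ⟨‖x‖⁻¹ • x, Wᗮ.smul_mem _ hxmem⟩ with hy
    have hyn : ‖y‖ = 1 := by
      show ‖‖x‖⁻¹ • x‖ = 1
      rw [norm_smul, norm_inv, norm_norm]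
      field_simp
    have hsph : y ∈ Metric.sphere (0 : ↥Wᗮ) 1 := by
      simpa [mem_sphere_zero_iff_norm] using hyn
    have hcont : ContinuousOn (fun u : ↥Wᗮ => s (u : V) (u : V)) (Metric.sphere 0 1) := by
      apply Continuous.continuousOn
      exact (bilin_cont s).comp continuous_subtype_val
    obtain ⟨u₀, hu₀mem, hu₀min'⟩ :=
      (isCompact_sphere (0 : ↥Wᗮ) 1).exists_isMinOn ⟨y, hsph⟩ hcont
    have hu₀min : ∀ z ∈ Metric.sphere (0 : ↥Wᗮ) 1, s (u₀:V) (u₀:V) ≤ s (z:V) (z:V) :=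
      fun z hz => hu₀min' hz
    set m := s (u₀ : V) (u₀ : V) with hm
    have hu₀norm : ‖(u₀ : V)‖ = 1 := by
      have := mem_sphere_zero_iff_norm.mp hu₀mem
      simpa using this
    have hmpos : 0 < m := by
      rcases lt_or_eq_of_le (hpos (u₀ : V)) with h | h
      · exact h
      · exfalso
        have hu₀W : (u₀ : V) ∈ W := (hW _).mpr h.symm
        have hu₀O : (u₀ : V) ∈ Wᗮ := u₀.2
        have : (u₀ : V) = 0 := by
          have hinner := (Submodule.mem_orthogonal W ((u₀ : V))).mp hu₀O _ hu₀W
          exact inner_self_eq_zero.mp hinner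
        rw [this] at hu₀norm; simp at hu₀norm
    refine ⟨m, hmpos, fun u hu => ?_⟩
    rcases eq_or_ne u 0 with rfl | hune
    · simp
    · have hun : (0:ℝ) < ‖u‖ := norm_pos_iff.mpr hune
      set z : ↥Wᗮ := ⟨‖u‖⁻¹ • u, Wᗮ.smul_mem _ hu⟩ with hz
      have hzsph : z ∈ Metric.sphere (0 : ↥Wᗮ) 1 := by
        rw [mem_sphere_zero_iff_norm]
        show ‖‖u‖⁻¹ • u‖ = 1
        rw [norm_smul, norm_inv, norm_norm]; field_simp
      have hmin := hu₀min z hzsph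
      have hzval : s (z : V) (z : V) = ‖u‖⁻¹ * ‖u‖⁻¹ * s u u := by
        show s (‖u‖⁻¹ • u) (‖u‖⁻¹ • u) = _
        simp [map_smul, LinearMap.smul_apply, smul_eq_mul]; ring
      rw [hzval] at hmin
      have h2 : m * ‖u‖ ^ 2 ≤ ‖u‖⁻¹ * ‖u‖⁻¹ * s u u * ‖u‖ ^ 2 := by
        nlinarith [sq_nonneg ‖u‖, hmin, hun]
      calc m * ‖u‖ ^ 2 ≤ ‖u‖⁻¹ * ‖u‖⁻¹ * s u u * ‖u‖ ^ 2 := h2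
        _ = s u u := by
            rw [pow_two]
            field_simp

end aux2

lemma bilin_bound' {V : Type*} [NormedAddCommGroup V] [InnerProductSpace ℝ V]
    [FiniteDimensional ℝ V] (b : V →ₗ[ℝ] V →ₗ[ℝ] ℝ) :
    ∃ M : ℝ, 0 ≤ M ∧ ∀ x y : V, |b x y| ≤ M * ‖x‖ * ‖y‖ :=
  ⟨‖bilinCLM b‖, (bilinCLM b).opNorm_nonneg, bilin_bound b⟩

lemma lin_bound {V : Type*} [NormedAddCommGroup V] [InnerProductSpace ℝ V]
    [FiniteDimensional ℝ V] (f : V →ₗ[ℝ] ℝ) :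
    ∃ M : ℝ, 0 ≤ M ∧ ∀ v : V, |f v| ≤ M * ‖v‖ := by
  refine ⟨‖LinearMap.toContinuousLinearMap f‖, norm_nonneg _, fun v => ?_⟩
  have h := (LinearMap.toContinuousLinearMap f).le_opNorm v
  simpa [LinearMap.coe_toContinuousLinearMap', Real.norm_eq_abs] using h

/-- Quantitative rate in the super-penalization limit (Theorem 1 of the paper):
with `a` a symmetric coercive bilinear form (coercivity constant `α`), `s` a
symmetric positive semidefinite penalty form with kernel `W`, `uσ σ` the
penalized solution and `uInf ∈ W` the constrained solution, there are constants
`C, C'` independent of `σ` with `s(uσ,uσ) ≤ C/σ` and `‖uσ - uInf‖ ≤ C'/σ`. -/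
theorem stmt9 (V : Type*) [NormedAddCommGroup V] [InnerProductSpace ℝ V]
    [FiniteDimensional ℝ V]
    (a s : V →ₗ[ℝ] V →ₗ[ℝ] ℝ)
    (ha_symm : ∀ x y : V, a x y = a y x)
    (hs_symm : ∀ x y : V, s x y = s y x)
    (α : ℝ) (hα : 0 < α) (hcoer : ∀ v : V, α * ‖v‖ ^ 2 ≤ a v v)
    (hs_pos : ∀ v : V, 0 ≤ s v v)
    (F : V →ₗ[ℝ] ℝ)
    (W : Submodule ℝ V) (hW : ∀ v : V, v ∈ W ↔ s v v = 0)
    (uσ : ℝ → V)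
    (huσ : ∀ σ : ℝ, 0 < σ → ∀ v : V, a (uσ σ) v + σ * s (uσ σ) v = F v)
    (uInf : V) (huInfW : uInf ∈ W)
    (huInf : ∀ w ∈ W, a uInf w = F w) :
    ∃ C C' : ℝ, ∀ σ : ℝ, 0 < σ →
      s (uσ σ) (uσ σ) ≤ C / σ ∧ ‖uσ σ - uInf‖ ≤ C' / σ := by
  classical
  obtain ⟨Ma, hMa0, habd⟩ := bilin_bound' a
  obtain ⟨MF, hMF0, hFb⟩ := lin_bound F
  obtain ⟨MG, hMG0, hGb'⟩ := lin_bound (F - a uInf)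
  have hGb : ∀ v : V, |F v - a uInf v| ≤ MG * ‖v‖ := by
    intro v; simpa [LinearMap.sub_apply] using hGb' v
  have hsz : ∀ w ∈ W, ∀ y : V, s w y = 0 := fun w hw y =>
    psd_zero s hs_symm hs_pos ((hW w).mp hw) y
  have hsz' : ∀ w ∈ W, ∀ y : V, s y w = 0 := fun w hw y =>
    (hs_symm y w).trans (hsz w hw y)
  obtain ⟨β, hβ, hβs⟩ := psd_coercive s hs_pos W hW
  -- uniform bound on the penalized solutions
  have hbd : ∀ σ : ℝ, 0 < σ → ‖uσ σ‖ ≤ MF / α := by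
    intro σ hσ
    have heq := huσ σ hσ (uσ σ)
    have h1 : α * ‖uσ σ‖ ^ 2 ≤ F (uσ σ) := by
      nlinarith [hcoer (uσ σ), mul_nonneg hσ.le (hs_pos (uσ σ))]
    have h2 : F (uσ σ) ≤ MF * ‖uσ σ‖ := le_trans (le_abs_self _) (hFb _)
    rcases eq_or_lt_of_le (norm_nonneg (uσ σ)) with h0 | h0
    · rw [← h0]; positivity
    · rw [le_div_iff₀ hα]; nlinarith
  set B := MF / α + ‖uInf‖ with hBdef
  have hB0 : 0 ≤ B := by positivity
  set K1 := MG + Ma * B with hK1def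
  have hK10 : 0 ≤ K1 := add_nonneg hMG0 (mul_nonneg hMa0 hB0)
  refine ⟨MF ^ 2 / α, (1 + Ma / α) * (K1 / β), ?_⟩
  intro σ hσ
  set u := uσ σ with hu
  have heqσ := huσ σ hσ
  -- first bound
  have hsb : s u u ≤ (MF ^ 2 / α) / σ := by
    have heq := heqσ u
    have ha0 : 0 ≤ a u u := le_trans (by positivity) (hcoer u)
    have h2 : F u ≤ MF * ‖u‖ := le_trans (le_abs_self _) (hFb u)
    have h3 : ‖u‖ ≤ MF / α := hbd σ hσ
    have h4 : σ * s u u ≤ MF ^ 2 / α := by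
      have h5 : MF * ‖u‖ ≤ MF * (MF / α) := by
        nlinarith
      have h6 : MF * (MF / α) = MF ^ 2 / α := by ring
      nlinarith
    rw [le_div_iff₀ hσ]; linarith [h4]
  refine ⟨by linarith [hsb], ?_⟩
  -- second bound
  set ev := u - uInf with hev
  have hevB : ‖ev‖ ≤ B := le_trans (norm_sub_le u uInf) (by
    have := hbd σ hσ; rw [hBdef]; linarith)
  set ew : V := (W.orthogonalProjectionOnto ev : V) with hew
  have hewW : ew ∈ W := SetLike.coe_mem _
  set ep : V := ev - ew with hep
  have hepO : ep ∈ Wᗮ := Submodule.sub_starProjection_mem_orthogonal (K := W) ev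
  have hsplit : ev = ep + ew := by rw [hep]; abel
  clear_value u ev ew ep
  clear hew hGb'
  -- the error equation
  have heq : ∀ v : V, a ev v + σ * s ev v = F v - a uInf v := by
    intro v
    have h1 : a ev v = a u v - a uInf v := by
      rw [hev, map_sub, LinearMap.sub_apply]
    have h2 : s ev v = s u v := by
      rw [hev, map_sub, LinearMap.sub_apply, hsz uInf huInfW v, sub_zero]
    rw [h1, h2, hu]
    linarith [heqσ v]
  -- a(ev, w) = 0 for w ∈ W
  have haW : ∀ w ∈ W, a ev w = 0 := by
    intro w hw
    have h1 : a ev w = a u w - a uInf w := by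
      rw [hev, map_sub, LinearMap.sub_apply]
    have h2 : a u w = F w := by
      rw [hu]
      have := heqσ w
      rw [hsz' w hw (uσ σ)] at this
      linarith
    rw [h1, h2, huInf w hw]; ring
  -- bound ‖ew‖ by ‖ep‖
  have hewb : ‖ew‖ ≤ (Ma / α) * ‖ep‖ := by
    have h0 : a ev ew = 0 := haW ew hewW
    have h1 : a ep ew + a ew ew = 0 := by
      have h1' : a ev ew = a ep ew + a ew ew := by
        rw [hsplit, map_add, LinearMap.add_apply]
      linarith [h0, h1']
    have h2 : α * ‖ew‖ ^ 2 ≤ Ma * ‖ep‖ * ‖ew‖ := by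
      have h3 := hcoer ew
      have h4 := habd ep ew
      have h5 : a ew ew = -(a ep ew) := by linarith
      nlinarith [neg_abs_le (a ep ew)]
    rcases eq_or_lt_of_le (norm_nonneg ew) with h0' | h0'
    · rw [← h0']; positivity
    · rw [div_mul_eq_mul_div, le_div_iff₀ hα]; nlinarith
  -- bound ‖ep‖
  have hepb : ‖ep‖ ≤ K1 / (β * σ) := by
    have h1 := heq ep
    have h2 : s ev ep = s ep ep := by
      rw [hsplit, map_add, LinearMap.add_apply, hsz ew hewW ep, add_zero]
    have h3 : β * ‖ep‖ ^ 2 ≤ s ep ep := hβs ep hepO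
    have h4 : σ * s ep ep ≤ K1 * ‖ep‖ := by
      have h5 : σ * s ev ep = (F ep - a uInf ep) - a ev ep := by linarith
      have h6 : |a ev ep| ≤ Ma * ‖ev‖ * ‖ep‖ := habd ev ep
      have h7 := hGb ep
      have h8 : (F ep - a uInf ep) - a ev ep ≤ MG * ‖ep‖ + Ma * ‖ev‖ * ‖ep‖ := by
        have := le_abs_self (F ep - a uInf ep)
        have := neg_abs_le (a ev ep)
        linarith
      have h9 : Ma * ‖ev‖ * ‖ep‖ ≤ Ma * B * ‖ep‖ :=
        mul_le_mul_of_nonneg_right (mul_le_mul_of_nonneg_left hevB hMa0) (norm_nonneg ep)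
      rw [h2] at h5
      rw [hK1def]
      have h10 : (MG + Ma * B) * ‖ep‖ = MG * ‖ep‖ + Ma * B * ‖ep‖ := by ring
      linarith
    rcases eq_or_lt_of_le (norm_nonneg ep) with h0' | h0'
    · rw [← h0']; positivity
    · rw [le_div_iff₀ (by positivity : (0:ℝ) < β * σ)]
      have hA : σ * (β * ‖ep‖ ^ 2) ≤ σ * s ep ep := mul_le_mul_of_nonneg_left h3 hσ.le
      have hB2 : σ * (β * ‖ep‖ ^ 2) ≤ K1 * ‖ep‖ := hA.trans h4
      have hC2 : (‖ep‖ * (β * σ)) * ‖ep‖ ≤ K1 * ‖ep‖ := by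
        calc (‖ep‖ * (β * σ)) * ‖ep‖ = σ * (β * ‖ep‖ ^ 2) := by ring
          _ ≤ K1 * ‖ep‖ := hB2
      exact le_of_mul_le_mul_right hC2 h0'
  -- conclude
  have hfinal : ‖ev‖ ≤ (1 + Ma / α) * ‖ep‖ := by
    calc ‖ev‖ = ‖ep + ew‖ := by rw [hsplit]
      _ ≤ ‖ep‖ + ‖ew‖ := norm_add_le _ _
      _ ≤ ‖ep‖ + (Ma / α) * ‖ep‖ := by linarith
      _ = (1 + Ma / α) * ‖ep‖ := by ring
  have hC' : (1 + Ma / α) * (K1 / β) / σ = (1 + Ma / α) * (K1 / (β * σ)) := by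
    rw [mul_div_assoc, div_div]
  rw [hC']
  calc ‖ev‖ ≤ (1 + Ma / α) * ‖ep‖ := hfinal
    _ ≤ (1 + Ma / α) * (K1 / (β * σ)) := by
        have hpos : (0:ℝ) ≤ 1 + Ma / α := by positivity
        exact mul_le_mul_of_nonneg_left hepb hpos
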